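/- Let G be a finite graph with symmetric edge weights and Ω a finite subset of vertices with at least two boundary vertices. Then the first nontrivial eigenvalue of the Dirichlet-to-Neumann operator satisfies λ_1(Ω) ≥ ½ · h(Ω̃) · h_J(Ω̃), where h(Ω̃) is the classical Cheeger constant of Ω̃ and h_J(Ω̃) is the Jammes-type Cheeger constant. -/

import Mathlib

open scoped Classical
open Finset

variable {V : Type*} [Fintype V]

/-- The vertex boundary δΩ of a finite set Ω of vertices. -/
noncomputable def bdry (μ : V → V → ℝ) (Ω : Finset V) : Finset V :=
  Finset.univ.filter fun x => x ∉ Ω ∧ ∃ y ∈ Ω, 0 < μ x y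

/-- Ω̄ = Ω ∪ δΩ. -/
noncomputable def clos (μ : V → V → ℝ) (Ω : Finset V) : Finset V :=
  Ω ∪ bdry μ Ω

/-- The vertex measure m on Ω̄. -/
noncomputable def vm (μ : V → V → ℝ) (Ω : Finset V) (x : V) : ℝ :=
  if x ∈ Ω then ∑ y, μ x y else ∑ y ∈ Ω, μ x y

/-- m(B) = Σ_{x ∈ B} m_x. -/
noncomputable def msum (μ : V → V → ℝ) (Ω : Finset V) (B : Finset V) : ℝ :=
  ∑ x ∈ B, vm μ Ω x

/-- Sum over the edges e = {x,y} of E(Ω,Ω̄) of μ_{xy} · F x y (for symmetric F). -/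
noncomputable def edgeSum (μ : V → V → ℝ) (Ω : Finset V) (F : V → V → ℝ) : ℝ :=
  (∑ x ∈ Ω, ∑ y ∈ Ω, μ x y * F x y) / 2 +
    ∑ x ∈ Ω, ∑ y ∈ bdry μ Ω, μ x y * F x y

/-- Dirichlet energy D_Ω(f). -/
noncomputable def dirichlet (μ : V → V → ℝ) (Ω : Finset V) (f : V → ℝ) : ℝ :=
  edgeSum μ Ω fun x y => (f x - f y) ^ 2

/-- Dirichlet form D_Ω(f,g). -/
noncomputable def dform (μ : V → V → ℝ) (Ω : Finset V) (f g : V → ℝ) : ℝ :=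
  edgeSum μ Ω fun x y => (f x - f y) * (g x - g y)

/-- μ(∂_Ω A): total weight of the edges of E(Ω,Ω̄) with exactly one endpoint in A. -/
noncomputable def cut (μ : V → V → ℝ) (Ω : Finset V) (A : Finset V) : ℝ :=
  edgeSum μ Ω fun x y => if (x ∈ A) ↔ (y ∈ A) then 0 else 1

/-- The graph Laplacian Δf(x) (used for x ∈ Ω). -/
noncomputable def lap (μ : V → V → ℝ) (Ω : Finset V) (f : V → ℝ) (x : V) : ℝ :=
  (∑ y, μ x y * (f y - f x)) / vm μ Ω x

/-- The outward normal derivative ∂f/∂n(z) (used for z ∈ δΩ). -/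
noncomputable def nderiv (μ : V → V → ℝ) (Ω : Finset V) (f : V → ℝ) (z : V) : ℝ :=
  (∑ x ∈ Ω, μ z x * (f z - f x)) / vm μ Ω z

/-- f is harmonic on Ω. -/
def IsHarmonic (μ : V → V → ℝ) (Ω : Finset V) (u : V → ℝ) : Prop :=
  ∀ x ∈ Ω, lap μ Ω u x = 0

/-- Adjacency in the graph Ω̃ = (Ω̄, E(Ω,Ω̄)). -/
def tilAdj (μ : V → V → ℝ) (Ω : Finset V) (x y : V) : Prop :=
  0 < μ x y ∧ (x ∈ Ω ∨ y ∈ Ω)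

/-- The graph Ω̃ is connected. -/
def TilConnected (μ : V → V → ℝ) (Ω : Finset V) : Prop :=
  ∀ x ∈ clos μ Ω, ∀ y ∈ clos μ Ω, Relation.ReflTransGen (tilAdj μ Ω) x y

/-- λ₁(Ω): the first nontrivial eigenvalue of the Dirichlet-to-Neumann operator,
characterized by its Rayleigh quotient. -/
noncomputable def lambda1 (μ : V → V → ℝ) (Ω : Finset V) : ℝ :=
  sInf { r : ℝ | ∃ u : V → ℝ, IsHarmonic μ Ω u ∧
    (∑ x ∈ bdry μ Ω, u x ^ 2 * vm μ Ω x) = 1 ∧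
    (∑ x ∈ bdry μ Ω, u x * vm μ Ω x) = 0 ∧
    r = dirichlet μ Ω u }

/-- The Escobar-type Cheeger constant h_E(Ω̃). -/
noncomputable def hE (μ : V → V → ℝ) (Ω : Finset V) : ℝ :=
  sInf { r : ℝ | ∃ A : Finset V, A ⊆ clos μ Ω ∧
    0 < msum μ Ω (A ∩ bdry μ Ω) ∧
    msum μ Ω (A ∩ bdry μ Ω) ≤ msum μ Ω (bdry μ Ω) / 2 ∧
    r = cut μ Ω A / msum μ Ω (A ∩ bdry μ Ω) }

/-- The Jammes-type Cheeger constant h_J(Ω̃). -/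
noncomputable def hJ (μ : V → V → ℝ) (Ω : Finset V) : ℝ :=
  sInf { r : ℝ | ∃ A : Finset V, A ⊆ clos μ Ω ∧
    (A ∩ bdry μ Ω).Nonempty ∧
    msum μ Ω A ≤ msum μ Ω (clos μ Ω) / 2 ∧
    r = cut μ Ω A / msum μ Ω (A ∩ bdry μ Ω) }

/-- The classical Cheeger constant h(Ω̃). -/
noncomputable def cheeger (μ : V → V → ℝ) (Ω : Finset V) : ℝ :=
  sInf { r : ℝ | ∃ A : Finset V, A ⊆ clos μ Ω ∧ A.Nonempty ∧
    msum μ Ω A ≤ msum μ Ω (clos μ Ω) / 2 ∧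
    r = cut μ Ω A / msum μ Ω A }


section AuxBasic

variable {μ : V → V → ℝ} {Ω : Finset V}

lemma mem_bdry_iff {x : V} : x ∈ bdry μ Ω ↔ x ∉ Ω ∧ ∃ y ∈ Ω, 0 < μ x y := by
  simp [bdry]

lemma bdry_disjoint : Disjoint Ω (bdry μ Ω) := by
  rw [Finset.disjoint_left]
  intro a ha hb
  exact ((mem_bdry_iff.1 hb).1 ha).elim

lemma Omega_subset_clos : Ω ⊆ clos μ Ω := Finset.subset_union_left

lemma bdry_subset_clos : bdry μ Ω ⊆ clos μ Ω := Finset.subset_union_right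

lemma vm_nonneg (hnn : ∀ x y, 0 ≤ μ x y) (x : V) : 0 ≤ vm μ Ω x := by
  unfold vm
  split <;> exact Finset.sum_nonneg fun y _ => hnn _ _

lemma msum_nonneg (hnn : ∀ x y, 0 ≤ μ x y) (B : Finset V) : 0 ≤ msum μ Ω B :=
  Finset.sum_nonneg fun x _ => vm_nonneg hnn x

lemma msum_mono (hnn : ∀ x y, 0 ≤ μ x y) {A B : Finset V} (h : A ⊆ B) :
    msum μ Ω A ≤ msum μ Ω B :=
  Finset.sum_le_sum_of_subset_of_nonneg h fun x _ _ => vm_nonneg hnn x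

lemma mu_zero_of_not_clos (hsym : ∀ x y, μ x y = μ y x) (hnn : ∀ x y, 0 ≤ μ x y)
    {x y : V} (hx : x ∈ Ω) (hy : y ∉ clos μ Ω) : μ x y = 0 := by
  by_contra h
  have hpos : 0 < μ y x := by
    rw [← hsym]; exact lt_of_le_of_ne (hnn x y) (Ne.symm h)
  have hyΩ : y ∉ Ω := fun hyΩ => hy (Omega_subset_clos hyΩ)
  exact hy (bdry_subset_clos (mem_bdry_iff.2 ⟨hyΩ, x, hx, hpos⟩))

lemma vm_pos_bdry (hnn : ∀ x y, 0 ≤ μ x y) {x : V} (hx : x ∈ bdry μ Ω) :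
    0 < vm μ Ω x := by
  obtain ⟨hxΩ, y, hy, hpos⟩ := mem_bdry_iff.1 hx
  have : vm μ Ω x = ∑ z ∈ Ω, μ x z := by unfold vm; rw [if_neg hxΩ]
  rw [this]
  exact lt_of_lt_of_le hpos (Finset.single_le_sum (fun z _ => hnn x z) hy)

lemma vm_pos_clos (hnn : ∀ x y, 0 ≤ μ x y) (hconn : TilConnected μ Ω)
    (hB : (bdry μ Ω).Nonempty) {x : V} (hx : x ∈ clos μ Ω) : 0 < vm μ Ω x := by
  rcases Finset.mem_union.1 hx with hxΩ | hxB
  · obtain ⟨z, hz⟩ := hB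
    have hxz : x ≠ z := fun h => (Finset.disjoint_left.1 bdry_disjoint hxΩ) (h ▸ hz)
    have hpath := hconn x hx z (bdry_subset_clos hz)
    rcases hpath.cases_head with h | ⟨c, ⟨hμ, _⟩, _⟩
    · exact (hxz h).elim
    · have : vm μ Ω x = ∑ y, μ x y := by unfold vm; rw [if_pos hxΩ]
      rw [this]
      exact lt_of_lt_of_le hμ (Finset.single_le_sum (fun z _ => hnn x z) (Finset.mem_univ c))
  · exact vm_pos_bdry hnn hxB

lemma edgeSum_nonneg (hnn : ∀ x y, 0 ≤ μ x y) {F : V → V → ℝ}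
    (hF : ∀ x y, 0 ≤ F x y) : 0 ≤ edgeSum μ Ω F := by
  unfold edgeSum
  have h1 : (0:ℝ) ≤ ∑ x ∈ Ω, ∑ y ∈ Ω, μ x y * F x y :=
    Finset.sum_nonneg fun x _ => Finset.sum_nonneg fun y _ => mul_nonneg (hnn x y) (hF x y)
  have h2 : (0:ℝ) ≤ ∑ x ∈ Ω, ∑ y ∈ bdry μ Ω, μ x y * F x y :=
    Finset.sum_nonneg fun x _ => Finset.sum_nonneg fun y _ => mul_nonneg (hnn x y) (hF x y)
  positivity

lemma edgeSum_mono (hnn : ∀ x y, 0 ≤ μ x y) {F G : V → V → ℝ}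
    (h : ∀ x y, F x y ≤ G x y) : edgeSum μ Ω F ≤ edgeSum μ Ω G := by
  unfold edgeSum
  have h1 : ∀ (s t : Finset V), (∑ x ∈ s, ∑ y ∈ t, μ x y * F x y) ≤
      ∑ x ∈ s, ∑ y ∈ t, μ x y * G x y := fun s t =>
    Finset.sum_le_sum fun x _ => Finset.sum_le_sum fun y _ =>
      mul_le_mul_of_nonneg_left (h x y) (hnn x y)
  have := h1 Ω Ω
  have := h1 Ω (bdry μ Ω)
  linarith

lemma edgeSum_add (F G : V → V → ℝ) :
    edgeSum μ Ω (fun x y => F x y + G x y) = edgeSum μ Ω F + edgeSum μ Ω G := by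
  unfold edgeSum
  simp only [mul_add, Finset.sum_add_distrib]
  ring

lemma cut_nonneg (hnn : ∀ x y, 0 ≤ μ x y) (A : Finset V) : 0 ≤ cut μ Ω A :=
  edgeSum_nonneg hnn fun x y => by split <;> norm_num

lemma dirichlet_nonneg (hnn : ∀ x y, 0 ≤ μ x y) (f : V → ℝ) : 0 ≤ dirichlet μ Ω f :=
  edgeSum_nonneg hnn fun x y => sq_nonneg _

lemma cheeger_nonneg (hnn : ∀ x y, 0 ≤ μ x y) : 0 ≤ cheeger μ Ω := by
  apply Real.sInf_nonneg
  rintro r ⟨A, -, -, -, rfl⟩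
  exact div_nonneg (cut_nonneg hnn A) (msum_nonneg hnn A)

lemma hJ_nonneg (hnn : ∀ x y, 0 ≤ μ x y) : 0 ≤ hJ μ Ω := by
  apply Real.sInf_nonneg
  rintro r ⟨A, -, -, -, rfl⟩
  exact div_nonneg (cut_nonneg hnn A) (msum_nonneg hnn _)

end AuxBasic


section AuxMedian

variable {μ : V → V → ℝ} {Ω : Finset V}

lemma exists_median (B : Finset V) (f : V → ℝ) (m : V → ℝ) (hm : ∀ x, 0 ≤ m x) :
    ∃ t : ℝ, (∑ x ∈ B.filter (fun x => t < f x), m x) ≤ (∑ x ∈ B, m x) / 2 ∧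
      (∑ x ∈ B.filter (fun x => f x < t), m x) ≤ (∑ x ∈ B, m x) / 2 := by
  have htot : (0:ℝ) ≤ ∑ x ∈ B, m x := Finset.sum_nonneg fun x _ => hm x
  rcases B.eq_empty_or_nonempty with hB | hB
  · exact ⟨0, by simp [hB]⟩
  have hI : (B.image f).Nonempty := hB.image f
  set C := (B.image f).filter
      (fun t => (∑ x ∈ B.filter (fun x => t < f x), m x) ≤ (∑ x ∈ B, m x) / 2) with hC
  have hCne : C.Nonempty := by
    refine ⟨(B.image f).max' hI, Finset.mem_filter.2 ⟨(B.image f).max'_mem hI, ?_⟩⟩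
    have : B.filter (fun x => (B.image f).max' hI < f x) = ∅ := by
      apply Finset.filter_false_of_mem
      intro x hx
      exact not_lt.2 (Finset.le_max' _ _ (Finset.mem_image_of_mem f hx))
    rw [this]
    simpa using by positivity
  set t₀ := C.min' hCne with ht₀
  have ht₀mem := C.min'_mem hCne
  have hfirst : (∑ x ∈ B.filter (fun x => t₀ < f x), m x) ≤ (∑ x ∈ B, m x) / 2 :=
    (Finset.mem_filter.1 ht₀mem).2
  refine ⟨t₀, hfirst, ?_⟩
  by_cases hlt : (B.filter (fun x => f x < t₀)).Nonempty
  · obtain ⟨x₀, hx₀⟩ := hlt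
    have hx₀B : x₀ ∈ B := (Finset.mem_filter.1 hx₀).1
    have hx₀lt : f x₀ < t₀ := (Finset.mem_filter.1 hx₀).2
    set J := (B.image f).filter (fun t => t < t₀) with hJ
    have hJne : J.Nonempty := ⟨f x₀, Finset.mem_filter.2 ⟨Finset.mem_image_of_mem f hx₀B, hx₀lt⟩⟩
    set t' := J.max' hJne with ht'
    have ht'mem := J.max'_mem hJne
    have ht'I : t' ∈ B.image f := (Finset.mem_filter.1 ht'mem).1
    have ht'lt : t' < t₀ := (Finset.mem_filter.1 ht'mem).2
    have ht'notC : t' ∉ C := by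
      intro h
      exact absurd (C.min'_le t' h) (not_le.2 ht'lt)
    have hbig : (∑ x ∈ B, m x) / 2 < ∑ x ∈ B.filter (fun x => t' < f x), m x := by
      by_contra h
      exact ht'notC (Finset.mem_filter.2 ⟨ht'I, not_lt.1 h⟩)
    have hset : B.filter (fun x => f x < t₀) = B \ B.filter (fun x => t' < f x) := by
      ext x
      simp only [Finset.mem_filter, Finset.mem_sdiff, not_and, not_lt]
      constructor
      · rintro ⟨hxB, hxlt⟩
        exact ⟨hxB, fun _ =>
          Finset.le_max' J (f x) (Finset.mem_filter.2 ⟨Finset.mem_image_of_mem f hxB, hxlt⟩)⟩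
      · rintro ⟨hxB, hx⟩
        exact ⟨hxB, lt_of_le_of_lt (hx hxB) ht'lt⟩
    rw [hset, Finset.sum_sdiff_eq_sub (Finset.filter_subset _ _)]
    linarith
  · rw [Finset.not_nonempty_iff_eq_empty.1 hlt]
    simpa using by positivity

end AuxMedian


section AuxIntegral

open MeasureTheory Set

lemma fun_lt_eq_indicator (a c : ℝ) :
    (fun s : ℝ => if s < a then c else 0) = Set.indicator (Set.Iio a) (fun _ => c) := by
  funext s
  by_cases h : s < a <;> simp [Set.indicator_apply, Set.mem_Iio, h]

lemma integrable_indicator_lt (a c : ℝ) :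
    Integrable (fun s : ℝ => if s < a then c else 0) (volume.restrict (Set.Ioi 0)) := by
  rw [fun_lt_eq_indicator]
  rw [integrable_indicator_iff measurableSet_Iio]
  refine integrableOn_const (lt_top_iff_ne_top.1 ?_)
  rw [Measure.restrict_apply measurableSet_Iio]
  have : Set.Iio a ∩ Set.Ioi 0 = Set.Ioo 0 a := by
    ext s; simp [Set.mem_Ioo, and_comm]
  rw [this]
  exact measure_Ioo_lt_top

lemma integral_indicator_lt (a c : ℝ) (ha : 0 ≤ a) :
    (∫ s in Set.Ioi (0:ℝ), (if s < a then c else 0)) = c * a := by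
  rw [fun_lt_eq_indicator, integral_indicator measurableSet_Iio]
  rw [setIntegral_const, measureReal_def, Measure.restrict_apply measurableSet_Iio]
  have : Set.Iio a ∩ Set.Ioi 0 = Set.Ioo 0 a := by
    ext s; simp [Set.mem_Ioo, and_comm]
  rw [this, Real.volume_Ioo, smul_eq_mul]
  rw [ENNReal.toReal_ofReal (by linarith)]
  ring

lemma xor_eq_sub {a b : ℝ} (hab : a ≤ b) (s : ℝ) :
    (if (s < a) ↔ (s < b) then (0:ℝ) else 1) =
      (if s < b then (1:ℝ) else 0) - (if s < a then (1:ℝ) else 0) := by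
  by_cases h1 : s < a <;> by_cases h2 : s < b
  · simp [h1, h2]
  · exact absurd (h1.trans_le hab) h2
  · simp [h1, h2]
  · simp [h1, h2]

lemma xor_comm_eq (a b : ℝ) :
    (fun s : ℝ => if (s < a) ↔ (s < b) then (0:ℝ) else 1) =
      (fun s : ℝ => if (s < b) ↔ (s < a) then (0:ℝ) else 1) := by
  funext s
  congr 1
  exact propext iff_comm

lemma integrable_xor (a b : ℝ) :
    Integrable (fun s : ℝ => if (s < a) ↔ (s < b) then (0:ℝ) else 1)
      (volume.restrict (Set.Ioi 0)) := by
  rcases le_total a b with hab | hab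
  · have : (fun s : ℝ => if (s < a) ↔ (s < b) then (0:ℝ) else 1) =
        fun s => (if s < b then (1:ℝ) else 0) - (if s < a then (1:ℝ) else 0) :=
      funext (xor_eq_sub hab)
    rw [this]
    exact (integrable_indicator_lt b 1).sub (integrable_indicator_lt a 1)
  · rw [xor_comm_eq]
    have : (fun s : ℝ => if (s < b) ↔ (s < a) then (0:ℝ) else 1) =
        fun s => (if s < a then (1:ℝ) else 0) - (if s < b then (1:ℝ) else 0) :=
      funext (xor_eq_sub hab)
    rw [this]
    exact (integrable_indicator_lt a 1).sub (integrable_indicator_lt b 1)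

lemma integral_xor {a b : ℝ} (ha : 0 ≤ a) (hb : 0 ≤ b) :
    (∫ s in Set.Ioi (0:ℝ), (if (s < a) ↔ (s < b) then (0:ℝ) else 1)) = |a - b| := by
  rcases le_total a b with hab | hab
  · rw [show (fun s : ℝ => if (s < a) ↔ (s < b) then (0:ℝ) else 1) =
        fun s => (if s < b then (1:ℝ) else 0) - (if s < a then (1:ℝ) else 0) from
      funext (xor_eq_sub hab)]
    rw [integral_sub (integrable_indicator_lt b 1) (integrable_indicator_lt a 1)]
    rw [integral_indicator_lt b 1 hb, integral_indicator_lt a 1 ha]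
    rw [abs_of_nonpos (by linarith)]
    ring
  · rw [xor_comm_eq]
    rw [show (fun s : ℝ => if (s < b) ↔ (s < a) then (0:ℝ) else 1) =
        fun s => (if s < a then (1:ℝ) else 0) - (if s < b then (1:ℝ) else 0) from
      funext (xor_eq_sub hab)]
    rw [integral_sub (integrable_indicator_lt a 1) (integrable_indicator_lt b 1)]
    rw [integral_indicator_lt b 1 hb, integral_indicator_lt a 1 ha]
    rw [abs_of_nonneg (by linarith)]
    ring

end AuxIntegral

section AuxCS

lemma weighted_cs {ι : Type*} (s : Finset ι) (c a b : ι → ℝ) (hc : ∀ i ∈ s, 0 ≤ c i) :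
    (∑ i ∈ s, c i * (a i * b i))^2 ≤ (∑ i ∈ s, c i * a i^2) * (∑ i ∈ s, c i * b i^2) := by
  have e1 : ∑ i ∈ s, c i * (a i * b i)
      = ∑ i ∈ s, (Real.sqrt (c i) * a i) * (Real.sqrt (c i) * b i) := by
    refine Finset.sum_congr rfl fun i hi => ?_
    have h := Real.mul_self_sqrt (hc i hi)
    calc c i * (a i * b i) = (Real.sqrt (c i) * Real.sqrt (c i)) * (a i * b i) := by rw [h]
    _ = (Real.sqrt (c i) * a i) * (Real.sqrt (c i) * b i) := by ring
  have e2 : ∑ i ∈ s, c i * a i ^ 2 = ∑ i ∈ s, (Real.sqrt (c i) * a i) ^ 2 := by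
    refine Finset.sum_congr rfl fun i hi => ?_
    have h := Real.mul_self_sqrt (hc i hi)
    calc c i * a i ^ 2 = (Real.sqrt (c i) * Real.sqrt (c i)) * a i ^2 := by rw [h]
    _ = (Real.sqrt (c i) * a i) ^ 2 := by ring
  have e3 : ∑ i ∈ s, c i * b i ^ 2 = ∑ i ∈ s, (Real.sqrt (c i) * b i) ^ 2 := by
    refine Finset.sum_congr rfl fun i hi => ?_
    have h := Real.mul_self_sqrt (hc i hi)
    calc c i * b i ^ 2 = (Real.sqrt (c i) * Real.sqrt (c i)) * b i ^2 := by rw [h]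
    _ = (Real.sqrt (c i) * b i) ^ 2 := by ring
  rw [e1, e2, e3]
  exact Finset.sum_mul_sq_le_sq_mul_sq s _ _

variable {μ : V → V → ℝ} {Ω : Finset V}

lemma degree_bound (hsym : ∀ x y, μ x y = μ y x) (hnn : ∀ x y, 0 ≤ μ x y) (w : V → ℝ) :
    edgeSum μ Ω (fun x y => w x ^ 2 + w y ^ 2) ≤ ∑ x ∈ clos μ Ω, w x ^ 2 * vm μ Ω x := by
  have key1 : ∑ x ∈ Ω, ∑ y ∈ Ω, μ x y * (w x ^ 2 + w y ^ 2)
      = 2 * ∑ x ∈ Ω, w x ^ 2 * ∑ y ∈ Ω, μ x y := by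
    have swap : ∑ x ∈ Ω, ∑ y ∈ Ω, μ x y * w y ^ 2
        = ∑ x ∈ Ω, ∑ y ∈ Ω, μ x y * w x ^ 2 := by
      rw [Finset.sum_comm]
      refine Finset.sum_congr rfl fun x _ => Finset.sum_congr rfl fun y _ => by
        rw [hsym]
    calc ∑ x ∈ Ω, ∑ y ∈ Ω, μ x y * (w x ^ 2 + w y ^ 2)
        = (∑ x ∈ Ω, ∑ y ∈ Ω, μ x y * w x ^ 2) + ∑ x ∈ Ω, ∑ y ∈ Ω, μ x y * w y ^ 2 := by
          simp [mul_add, Finset.sum_add_distrib]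
      _ = 2 * ∑ x ∈ Ω, ∑ y ∈ Ω, μ x y * w x ^ 2 := by rw [swap]; ring
      _ = 2 * ∑ x ∈ Ω, w x ^ 2 * ∑ y ∈ Ω, μ x y := by
          congr 1
          refine Finset.sum_congr rfl fun x _ => ?_
          rw [Finset.mul_sum]
          exact Finset.sum_congr rfl fun y _ => by ring
  have key2 : ∑ x ∈ Ω, ∑ y ∈ bdry μ Ω, μ x y * (w x ^ 2 + w y ^ 2)
      = (∑ x ∈ Ω, w x ^ 2 * ∑ y ∈ bdry μ Ω, μ x y)
        + ∑ y ∈ bdry μ Ω, w y ^ 2 * vm μ Ω y := by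
    have e1 : ∑ x ∈ Ω, ∑ y ∈ bdry μ Ω, μ x y * w x ^ 2
        = ∑ x ∈ Ω, w x ^ 2 * ∑ y ∈ bdry μ Ω, μ x y := by
      refine Finset.sum_congr rfl fun x _ => ?_
      rw [Finset.mul_sum]
      exact Finset.sum_congr rfl fun y _ => by ring
    have e2 : ∑ x ∈ Ω, ∑ y ∈ bdry μ Ω, μ x y * w y ^ 2
        = ∑ y ∈ bdry μ Ω, w y ^ 2 * vm μ Ω y := by
      rw [Finset.sum_comm]
      refine Finset.sum_congr rfl fun y hy => ?_
      have hyΩ : y ∉ Ω := (mem_bdry_iff.1 hy).1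
      have hvm : vm μ Ω y = ∑ x ∈ Ω, μ y x := by unfold vm; rw [if_neg hyΩ]
      rw [hvm, Finset.mul_sum]
      exact Finset.sum_congr rfl fun x _ => by rw [hsym]; ring
    calc ∑ x ∈ Ω, ∑ y ∈ bdry μ Ω, μ x y * (w x ^ 2 + w y ^ 2)
        = (∑ x ∈ Ω, ∑ y ∈ bdry μ Ω, μ x y * w x ^ 2)
          + ∑ x ∈ Ω, ∑ y ∈ bdry μ Ω, μ x y * w y ^ 2 := by
          simp [mul_add, Finset.sum_add_distrib]
      _ = _ := by rw [e1, e2]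
  have deg_le : ∀ x ∈ Ω, (∑ y ∈ Ω, μ x y) + ∑ y ∈ bdry μ Ω, μ x y ≤ vm μ Ω x := by
    intro x hx
    have hvm : vm μ Ω x = ∑ y, μ x y := by unfold vm; rw [if_pos hx]
    rw [hvm, ← Finset.sum_union bdry_disjoint]
    exact Finset.sum_le_sum_of_subset_of_nonneg (Finset.subset_univ _)
      fun y _ _ => hnn x y
  have hclos : ∑ x ∈ clos μ Ω, w x ^ 2 * vm μ Ω x
      = (∑ x ∈ Ω, w x ^ 2 * vm μ Ω x) + ∑ y ∈ bdry μ Ω, w y ^ 2 * vm μ Ω y := by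
    unfold clos
    rw [Finset.sum_union bdry_disjoint]
  unfold edgeSum
  rw [key1, key2, hclos]
  have hmain : ∑ x ∈ Ω, w x ^ 2 * ((∑ y ∈ Ω, μ x y) + ∑ y ∈ bdry μ Ω, μ x y)
      ≤ ∑ x ∈ Ω, w x ^ 2 * vm μ Ω x :=
    Finset.sum_le_sum fun x hx =>
      mul_le_mul_of_nonneg_left (deg_le x hx) (sq_nonneg _)
  have hexp : ∑ x ∈ Ω, w x ^ 2 * ((∑ y ∈ Ω, μ x y) + ∑ y ∈ bdry μ Ω, μ x y)
      = (∑ x ∈ Ω, w x ^ 2 * ∑ y ∈ Ω, μ x y) + ∑ x ∈ Ω, w x ^ 2 * ∑ y ∈ bdry μ Ω, μ x y := by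
    simp [mul_add, Finset.sum_add_distrib]
  linarith

end AuxCS


section AuxKey

open MeasureTheory Set

variable {μ : V → V → ℝ} {Ω : Finset V}

lemma edgeSum_two (F : V → V → ℝ) :
    edgeSum μ Ω (fun x y => 2 * F x y) = 2 * edgeSum μ Ω F := by
  have : (fun x y => 2 * F x y) = fun x y => F x y + F x y := by
    funext x y; ring
  rw [this, edgeSum_add]
  ring

lemma cs_bound (hsym : ∀ x y, μ x y = μ y x) (hnn : ∀ x y, 0 ≤ μ x y)
    (w : V → ℝ) (hw : ∀ x, 0 ≤ w x) :
    (edgeSum μ Ω fun x y => |w x ^ 2 - w y ^ 2|) ^ 2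
      ≤ dirichlet μ Ω w * (2 * ∑ x ∈ clos μ Ω, w x ^ 2 * vm μ Ω x) := by
  classical
  have habs : ∀ x y : V, |w x - w y| * (w x + w y) = |w x ^ 2 - w y ^ 2| := by
    intro x y
    have h1 : (0:ℝ) ≤ w x + w y := add_nonneg (hw x) (hw y)
    calc |w x - w y| * (w x + w y) = |w x - w y| * |w x + w y| := by
          rw [abs_of_nonneg h1]
      _ = |(w x - w y) * (w x + w y)| := (abs_mul _ _).symm
      _ = |w x ^ 2 - w y ^ 2| := by rw [show (w x - w y) * (w x + w y) = w x ^2 - w y ^2 by ring]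
  set S : Finset ((V × V) ⊕ (V × V)) := (Ω ×ˢ Ω).disjSum (Ω ×ˢ bdry μ Ω) with hS
  set c : (V × V) ⊕ (V × V) → ℝ := Sum.elim (fun p => μ p.1 p.2 / 2) (fun p => μ p.1 p.2) with hc
  set a : (V × V) ⊕ (V × V) → ℝ :=
    Sum.elim (fun p => |w p.1 - w p.2|) (fun p => |w p.1 - w p.2|) with ha
  set b : (V × V) ⊕ (V × V) → ℝ :=
    Sum.elim (fun p => w p.1 + w p.2) (fun p => w p.1 + w p.2) with hb
  have hcpos : ∀ i ∈ S, 0 ≤ c i := by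
    rintro (p | p) _
    · simp only [hc, Sum.elim_inl]
      have := hnn p.1 p.2; linarith
    · simp only [hc, Sum.elim_inr]
      exact hnn p.1 p.2
  have key := weighted_cs S c a b hcpos
  have e1 : ∑ i ∈ S, c i * (a i * b i) = edgeSum μ Ω fun x y => |w x ^ 2 - w y ^ 2| := by
    rw [hS, Finset.sum_disjSum]
    simp only [hc, ha, hb, Sum.elim_inl, Sum.elim_inr]
    rw [Finset.sum_product, Finset.sum_product]
    unfold edgeSum
    congr 1
    · rw [Finset.sum_div]
      refine Finset.sum_congr rfl fun x _ => ?_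
      rw [Finset.sum_div]
      refine Finset.sum_congr rfl fun y _ => ?_
      dsimp only
      rw [← habs x y]; ring
    · refine Finset.sum_congr rfl fun x _ => Finset.sum_congr rfl fun y _ => ?_
      dsimp only
      rw [← habs x y]
  have e2 : ∑ i ∈ S, c i * a i ^ 2 = dirichlet μ Ω w := by
    rw [hS, Finset.sum_disjSum]
    simp only [hc, ha, Sum.elim_inl, Sum.elim_inr]
    rw [Finset.sum_product, Finset.sum_product]
    unfold dirichlet edgeSum
    congr 1
    · rw [Finset.sum_div]
      refine Finset.sum_congr rfl fun x _ => ?_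
      rw [Finset.sum_div]
      refine Finset.sum_congr rfl fun y _ => ?_
      dsimp only
      rw [sq_abs]; ring
    · refine Finset.sum_congr rfl fun x _ => Finset.sum_congr rfl fun y _ => ?_
      dsimp only
      rw [sq_abs]
  have e3 : ∑ i ∈ S, c i * b i ^ 2 = edgeSum μ Ω fun x y => (w x + w y) ^ 2 := by
    rw [hS, Finset.sum_disjSum]
    simp only [hc, hb, Sum.elim_inl, Sum.elim_inr]
    rw [Finset.sum_product, Finset.sum_product]
    unfold edgeSum
    congr 1
    · rw [Finset.sum_div]
      refine Finset.sum_congr rfl fun x _ => ?_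
      rw [Finset.sum_div]
      refine Finset.sum_congr rfl fun y _ => ?_
      dsimp only
      ring
  have e4 : (edgeSum μ Ω fun x y => (w x + w y) ^ 2)
      ≤ 2 * ∑ x ∈ clos μ Ω, w x ^ 2 * vm μ Ω x := by
    have step1 : (edgeSum μ Ω fun x y => (w x + w y) ^ 2)
        ≤ edgeSum μ Ω fun x y => 2 * (w x ^ 2 + w y ^ 2) :=
      edgeSum_mono hnn fun x y => by nlinarith [sq_nonneg (w x - w y)]
    rw [edgeSum_two] at step1
    have step2 := degree_bound (Ω := Ω) hsym hnn w
    linarith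
  rw [e1, e2, e3] at key
  calc (edgeSum μ Ω fun x y => |w x ^ 2 - w y ^ 2|) ^ 2
      ≤ dirichlet μ Ω w * edgeSum μ Ω fun x y => (w x + w y) ^ 2 := key
    _ ≤ dirichlet μ Ω w * (2 * ∑ x ∈ clos μ Ω, w x ^ 2 * vm μ Ω x) :=
        mul_le_mul_of_nonneg_left e4 (dirichlet_nonneg hnn w)

lemma key_estimate (hsym : ∀ x y, μ x y = μ y x) (hnn : ∀ x y, 0 ≤ μ x y)
    (hconn : TilConnected μ Ω) (hB : (bdry μ Ω).Nonempty)
    (w : V → ℝ) (hw : ∀ x, 0 ≤ w x)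
    (hsupp : msum μ Ω ((clos μ Ω).filter (fun x => 0 < w x)) ≤ msum μ Ω (clos μ Ω) / 2) :
    cheeger μ Ω * hJ μ Ω * (∑ x ∈ bdry μ Ω, w x ^ 2 * vm μ Ω x)
      ≤ 2 * dirichlet μ Ω w := by
  classical
  set g : V → ℝ := fun x => w x ^ 2 with hg
  have hgnn : ∀ x, 0 ≤ g x := fun x => sq_nonneg _
  set A : ℝ → Finset V := fun s => (clos μ Ω).filter (fun x => s < g x) with hA
  set T : ℝ := edgeSum μ Ω (fun x y => |g x - g y|) with hT
  set P : ℝ := ∑ x ∈ clos μ Ω, g x * vm μ Ω x with hP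
  set Q : ℝ := ∑ x ∈ bdry μ Ω, g x * vm μ Ω x with hQ
  -- membership in A s
  have hmemA : ∀ s : ℝ, ∀ x ∈ clos μ Ω, (x ∈ A s ↔ s < g x) := by
    intro s x hx
    simp [hA, Finset.mem_filter, hx]
  -- cut as explicit sums
  have hcut : ∀ s : ℝ, cut μ Ω (A s) =
      (∑ p ∈ Ω ×ˢ Ω, μ p.1 p.2 * (if (s < g p.1) ↔ (s < g p.2) then (0:ℝ) else 1)) / 2
        + ∑ p ∈ Ω ×ˢ bdry μ Ω,
            μ p.1 p.2 * (if (s < g p.1) ↔ (s < g p.2) then (0:ℝ) else 1) := by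
    intro s
    unfold cut edgeSum
    rw [Finset.sum_product, Finset.sum_product]
    congr 1
    · congr 1
      refine Finset.sum_congr rfl fun x hx => Finset.sum_congr rfl fun y hy => ?_
      congr 1
      exact if_congr (iff_congr (hmemA s x (Omega_subset_clos hx))
        (hmemA s y (Omega_subset_clos hy))) rfl rfl
    · refine Finset.sum_congr rfl fun x hx => Finset.sum_congr rfl fun y hy => ?_
      congr 1
      exact if_congr (iff_congr (hmemA s x (Omega_subset_clos hx))
        (hmemA s y (bdry_subset_clos hy))) rfl rfl
  have hcutfun : (fun s : ℝ => cut μ Ω (A s)) =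
      fun s => (∑ p ∈ Ω ×ˢ Ω, μ p.1 p.2 * (if (s < g p.1) ↔ (s < g p.2) then (0:ℝ) else 1)) / 2
        + ∑ p ∈ Ω ×ˢ bdry μ Ω,
            μ p.1 p.2 * (if (s < g p.1) ↔ (s < g p.2) then (0:ℝ) else 1) :=
    funext hcut
  have hint1 : ∀ (p : V × V),
      Integrable (fun s : ℝ => μ p.1 p.2 * (if (s < g p.1) ↔ (s < g p.2) then (0:ℝ) else 1))
        (volume.restrict (Set.Ioi 0)) :=
    fun p => (integrable_xor _ _).const_mul _
  have hcutInt : Integrable (fun s : ℝ => cut μ Ω (A s)) (volume.restrict (Set.Ioi 0)) := by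
    rw [hcutfun]
    exact ((integrable_finset_sum _ fun p _ => hint1 p).div_const 2).add
      (integrable_finset_sum _ fun p _ => hint1 p)
  have hTval : (∫ s in Set.Ioi (0:ℝ), cut μ Ω (A s)) = T := by
    rw [hcutfun]
    rw [integral_add ((integrable_finset_sum _ fun p _ => hint1 p).div_const 2)
      (integrable_finset_sum _ fun p _ => hint1 p)]
    rw [integral_div, integral_finset_sum _ fun p _ => hint1 p,
      integral_finset_sum _ fun p _ => hint1 p]
    have hone : ∀ p : V × V,
        (∫ s in Set.Ioi (0:ℝ), μ p.1 p.2 * (if (s < g p.1) ↔ (s < g p.2) then (0:ℝ) else 1))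
          = μ p.1 p.2 * |g p.1 - g p.2| := by
      intro p
      rw [integral_const_mul _ _, integral_xor (hgnn p.1) (hgnn p.2)]
    simp only [hone]
    rw [hT]
    unfold edgeSum
    rw [Finset.sum_product, Finset.sum_product]
  -- msum of A s
  have hmsumfun : (fun s : ℝ => msum μ Ω (A s)) =
      fun s => ∑ x ∈ clos μ Ω, (if s < g x then vm μ Ω x else 0) := by
    funext s
    rw [hA]
    exact Finset.sum_filter _ _
  have hmsumInt : Integrable (fun s : ℝ => msum μ Ω (A s)) (volume.restrict (Set.Ioi 0)) := by
    rw [hmsumfun]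
    exact integrable_finset_sum _ fun x _ => integrable_indicator_lt _ _
  have hPval : (∫ s in Set.Ioi (0:ℝ), msum μ Ω (A s)) = P := by
    rw [hmsumfun, integral_finset_sum _ fun x _ => integrable_indicator_lt _ _]
    refine Finset.sum_congr rfl fun x _ => ?_
    rw [integral_indicator_lt _ _ (hgnn x)]
    ring
  -- msum of A s ∩ bdry
  have hABset : ∀ s : ℝ, A s ∩ bdry μ Ω = (bdry μ Ω).filter (fun x => s < g x) := by
    intro s
    ext x
    simp only [Finset.mem_inter, Finset.mem_filter, hA]
    constructor
    · rintro ⟨⟨_, h2⟩, h3⟩; exact ⟨h3, h2⟩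
    · rintro ⟨h3, h2⟩; exact ⟨⟨bdry_subset_clos h3, h2⟩, h3⟩
  have hmsumBfun : (fun s : ℝ => msum μ Ω (A s ∩ bdry μ Ω)) =
      fun s => ∑ x ∈ bdry μ Ω, (if s < g x then vm μ Ω x else 0) := by
    funext s
    rw [hABset s]
    exact Finset.sum_filter _ _
  have hmsumBInt : Integrable (fun s : ℝ => msum μ Ω (A s ∩ bdry μ Ω))
      (volume.restrict (Set.Ioi 0)) := by
    rw [hmsumBfun]
    exact integrable_finset_sum _ fun x _ => integrable_indicator_lt _ _
  have hQval : (∫ s in Set.Ioi (0:ℝ), msum μ Ω (A s ∩ bdry μ Ω)) = Q := by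
    rw [hmsumBfun, integral_finset_sum _ fun x _ => integrable_indicator_lt _ _]
    refine Finset.sum_congr rfl fun x _ => ?_
    rw [integral_indicator_lt _ _ (hgnn x)]
    ring
  -- pointwise bounds for s > 0
  have hAhalf : ∀ s : ℝ, 0 < s → msum μ Ω (A s) ≤ msum μ Ω (clos μ Ω) / 2 := by
    intro s hs
    refine le_trans (msum_mono hnn ?_) hsupp
    intro x hx
    rw [hA, Finset.mem_filter] at hx
    refine Finset.mem_filter.2 ⟨hx.1, ?_⟩
    by_contra hcontra
    push_neg at hcontra
    have : w x = 0 := le_antisymm hcontra (hw x)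
    rw [hg] at hx
    simp only [this] at hx
    nlinarith [hx.2]
  have hbddC : BddBelow { r : ℝ | ∃ A : Finset V, A ⊆ clos μ Ω ∧ A.Nonempty ∧
      msum μ Ω A ≤ msum μ Ω (clos μ Ω) / 2 ∧ r = cut μ Ω A / msum μ Ω A } := by
    refine ⟨0, ?_⟩
    rintro r ⟨B, -, -, -, rfl⟩
    exact div_nonneg (cut_nonneg hnn B) (msum_nonneg hnn B)
  have hbddJ : BddBelow { r : ℝ | ∃ A : Finset V, A ⊆ clos μ Ω ∧
      (A ∩ bdry μ Ω).Nonempty ∧ msum μ Ω A ≤ msum μ Ω (clos μ Ω) / 2 ∧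
      r = cut μ Ω A / msum μ Ω (A ∩ bdry μ Ω) } := by
    refine ⟨0, ?_⟩
    rintro r ⟨B, -, -, -, rfl⟩
    exact div_nonneg (cut_nonneg hnn B) (msum_nonneg hnn _)
  have hptC : ∀ s : ℝ, 0 < s → cheeger μ Ω * msum μ Ω (A s) ≤ cut μ Ω (A s) := by
    intro s hs
    by_cases hne : (A s).Nonempty
    · have hmempos : 0 < msum μ Ω (A s) :=
        Finset.sum_pos (fun x hx => vm_pos_clos hnn hconn hB (Finset.filter_subset _ _ hx)) hne
      have hle : cheeger μ Ω ≤ cut μ Ω (A s) / msum μ Ω (A s) :=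
        csInf_le hbddC ⟨A s, Finset.filter_subset _ _, hne, hAhalf s hs, rfl⟩
      calc cheeger μ Ω * msum μ Ω (A s) ≤ (cut μ Ω (A s) / msum μ Ω (A s)) * msum μ Ω (A s) :=
            mul_le_mul_of_nonneg_right hle hmempos.le
        _ = cut μ Ω (A s) := div_mul_cancel₀ _ hmempos.ne'
    · rw [Finset.not_nonempty_iff_eq_empty.1 hne]
      have : msum μ Ω (∅ : Finset V) = 0 := by simp [msum]
      rw [this, mul_zero]
      exact cut_nonneg hnn _
  have hptJ : ∀ s : ℝ, 0 < s → hJ μ Ω * msum μ Ω (A s ∩ bdry μ Ω) ≤ cut μ Ω (A s) := by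
    intro s hs
    by_cases hne : (A s ∩ bdry μ Ω).Nonempty
    · have hmempos : 0 < msum μ Ω (A s ∩ bdry μ Ω) :=
        Finset.sum_pos (fun x hx => vm_pos_bdry hnn (Finset.mem_inter.1 hx).2) hne
      have hle : hJ μ Ω ≤ cut μ Ω (A s) / msum μ Ω (A s ∩ bdry μ Ω) :=
        csInf_le hbddJ ⟨A s, Finset.filter_subset _ _, hne, hAhalf s hs, rfl⟩
      calc hJ μ Ω * msum μ Ω (A s ∩ bdry μ Ω)
          ≤ (cut μ Ω (A s) / msum μ Ω (A s ∩ bdry μ Ω)) * msum μ Ω (A s ∩ bdry μ Ω) :=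
            mul_le_mul_of_nonneg_right hle hmempos.le
        _ = cut μ Ω (A s) := div_mul_cancel₀ _ hmempos.ne'
    · rw [Finset.not_nonempty_iff_eq_empty.1 hne]
      have : msum μ Ω (∅ : Finset V) = 0 := by simp [msum]
      rw [this, mul_zero]
      exact cut_nonneg hnn _
  -- integral bounds
  have hCP : cheeger μ Ω * P ≤ T := by
    have := integral_mono_ae (hmsumInt.const_mul (cheeger μ Ω)) hcutInt
      ((ae_restrict_iff' measurableSet_Ioi).2 (ae_of_all _ fun s hs => hptC s hs))
    rwa [integral_const_mul _ _, hPval, hTval] at this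
  have hJQ : hJ μ Ω * Q ≤ T := by
    have := integral_mono_ae (hmsumBInt.const_mul (hJ μ Ω)) hcutInt
      ((ae_restrict_iff' measurableSet_Ioi).2 (ae_of_all _ fun s hs => hptJ s hs))
    rwa [integral_const_mul _ _, hQval, hTval] at this
  -- Cauchy-Schwarz
  have hcs : T ^ 2 ≤ dirichlet μ Ω w * (2 * P) := by
    rw [hT, hP, hg]
    exact cs_bound hsym hnn w hw
  -- combine
  have hQP : Q ≤ P :=
    Finset.sum_le_sum_of_subset_of_nonneg bdry_subset_clos
      fun x _ _ => mul_nonneg (hgnn x) (vm_nonneg hnn x)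
  have hQnn : 0 ≤ Q :=
    Finset.sum_nonneg fun x _ => mul_nonneg (hgnn x) (vm_nonneg hnn x)
  have hPnn : 0 ≤ P := le_trans hQnn hQP
  have hTnn : 0 ≤ T := edgeSum_nonneg hnn fun x y => abs_nonneg _
  have hgoal : cheeger μ Ω * hJ μ Ω * Q ≤ 2 * dirichlet μ Ω w := by
    rcases eq_or_lt_of_le hPnn with hP0 | hPpos
    · have hQ0 : Q = 0 := le_antisymm (hP0 ▸ hQP) hQnn
      rw [hQ0, mul_zero]
      have := dirichlet_nonneg (Ω := Ω) hnn w
      linarith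
    · have hmul : (cheeger μ Ω * P) * (hJ μ Ω * Q) ≤ T * T :=
        mul_le_mul hCP hJQ (mul_nonneg (hJ_nonneg hnn) hQnn) hTnn
      have hT2 : T * T ≤ dirichlet μ Ω w * (2 * P) := by
        have := hcs; nlinarith [sq_nonneg T]
      nlinarith [hmul, hT2, hPpos]
  exact hgoal

end AuxKey


section AuxExist

variable {μ : V → V → ℝ} {Ω : Finset V}

lemma lap_smul (c : ℝ) (u : V → ℝ) (x : V) :
    lap μ Ω (fun y => c * u y) x = c * lap μ Ω u x := by
  unfold lap
  rw [show (∑ y, μ x y * (c * u y - c * u x)) = c * ∑ y, μ x y * (u y - u x) by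
    rw [Finset.mul_sum]; exact Finset.sum_congr rfl fun y _ => by ring]
  ring

lemma max_principle (hnn : ∀ x y, 0 ≤ μ x y) (hconn : TilConnected μ Ω)
    (hB : (bdry μ Ω).Nonempty) (g : V → ℝ)
    (hg0 : ∀ x ∈ bdry μ Ω, g x = 0)
    (hharm : ∀ x ∈ Ω, vm μ Ω x * g x = ∑ y ∈ Ω, μ x y * g y) :
    ∀ x ∈ clos μ Ω, g x ≤ 0 := by
  obtain ⟨z, hz⟩ := hB
  obtain ⟨x₀, hx₀clos, hmax⟩ :=
    Finset.exists_max_image (clos μ Ω) g ⟨z, bdry_subset_clos hz⟩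
  intro x hx
  by_contra hpos
  push_neg at hpos
  set M := g x₀ with hM
  have hMpos : 0 < M := lt_of_lt_of_le hpos (hmax x hx)
  have hx₀Ω : x₀ ∈ Ω := by
    rcases Finset.mem_union.1 hx₀clos with h | h
    · exact h
    · exfalso; linarith [hg0 x₀ h, hMpos, hM]
  -- propagation step
  have step : ∀ a, (a ∈ Ω ∧ g a = M) → ∀ b, tilAdj μ Ω a b → b ∈ Ω ∧ g b = M := by
    rintro a ⟨haΩ, haM⟩ b ⟨hμab, -⟩
    have hvm : vm μ Ω a = ∑ y, μ a y := by unfold vm; rw [if_pos haΩ]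
    have heq : vm μ Ω a * M = ∑ y ∈ Ω, μ a y * g y := haM ▸ hharm a haΩ
    have hsplit : (∑ y, μ a y) = (∑ y ∈ Ω, μ a y) + ∑ y ∈ Finset.univ \ Ω, μ a y := by
      rw [add_comm, Finset.sum_sdiff (Finset.subset_univ Ω)]
    have hle1 : ∑ y ∈ Ω, μ a y * g y ≤ ∑ y ∈ Ω, μ a y * M :=
      Finset.sum_le_sum fun y hy =>
        mul_le_mul_of_nonneg_left (hmax y (Omega_subset_clos hy)) (hnn a y)
    have hle2 : (∑ y ∈ Ω, μ a y) * M ≤ vm μ Ω a * M := by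
      refine mul_le_mul_of_nonneg_right ?_ hMpos.le
      rw [hvm, hsplit]
      have : (0:ℝ) ≤ ∑ y ∈ Finset.univ \ Ω, μ a y :=
        Finset.sum_nonneg fun y _ => hnn a y
      linarith
    have hsum_mul : ∑ y ∈ Ω, μ a y * M = (∑ y ∈ Ω, μ a y) * M := by
      rw [Finset.sum_mul]
    -- all inequalities are equalities
    have heq2 : ∑ y ∈ Ω, μ a y * g y = ∑ y ∈ Ω, μ a y * M := by
      rw [hsum_mul]
      have h1 : vm μ Ω a * M ≤ (∑ y ∈ Ω, μ a y) * M := by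
        rw [← hsum_mul]; linarith [heq ▸ hle1]
      linarith [heq, hle2, hle1, hsum_mul]
    have heq3 : (∑ y ∈ Ω, μ a y) * M = vm μ Ω a * M := by
      rw [← hsum_mul, ← heq2, ← heq]
    have hzero_out : ∑ y ∈ Finset.univ \ Ω, μ a y = 0 := by
      have := mul_right_cancel₀ hMpos.ne' heq3
      rw [hvm, hsplit] at this
      linarith
    have hout_zero : ∀ y ∈ Finset.univ \ Ω, μ a y = 0 := by
      intro y hy
      have hnn' : ∀ y ∈ Finset.univ \ Ω, (0:ℝ) ≤ μ a y := fun y _ => hnn a y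
      exact (Finset.sum_eq_zero_iff_of_nonneg hnn').1 hzero_out y hy
    have hbΩ : b ∈ Ω := by
      by_contra hbΩ
      have := hout_zero b (Finset.mem_sdiff.2 ⟨Finset.mem_univ b, hbΩ⟩)
      exact absurd (this ▸ hμab) (lt_irrefl 0)
    have hterm : ∀ y ∈ Ω, μ a y * (M - g y) = 0 := by
      intro y hy
      have hdiff : ∑ y ∈ Ω, μ a y * (M - g y) = 0 := by
        have : ∑ y ∈ Ω, μ a y * (M - g y)
            = (∑ y ∈ Ω, μ a y * M) - ∑ y ∈ Ω, μ a y * g y := by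
          rw [← Finset.sum_sub_distrib]
          exact Finset.sum_congr rfl fun y _ => by ring
        rw [this, heq2]; ring
      have hnn'' : ∀ y ∈ Ω, (0:ℝ) ≤ μ a y * (M - g y) := fun y hy' =>
        mul_nonneg (hnn a y) (by linarith [hmax y (Omega_subset_clos hy')])
      exact (Finset.sum_eq_zero_iff_of_nonneg hnn'').1 hdiff y hy
    have hgb : g b = M := by
      have := hterm b hbΩ
      rcases mul_eq_zero.1 this with h | h
      · exact absurd (h ▸ hμab) (lt_irrefl 0)
      · linarith
    exact ⟨hbΩ, hgb⟩
  have hprop : ∀ b, Relation.ReflTransGen (tilAdj μ Ω) x₀ b → (b ∈ Ω ∧ g b = M) := by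
    intro b hb
    induction hb with
    | refl => exact ⟨hx₀Ω, rfl⟩
    | tail h hstep ih => exact step _ ih _ hstep
  have hzM := hprop z (hconn x₀ hx₀clos z (bdry_subset_clos hz))
  exact (Finset.disjoint_left.1 bdry_disjoint hzM.1) hz

lemma exists_normalized_harmonic (hsym : ∀ x y, μ x y = μ y x) (hnn : ∀ x y, 0 ≤ μ x y)
    (hconn : TilConnected μ Ω) (hcard : 2 ≤ (bdry μ Ω).card) :
    ∃ u : V → ℝ, IsHarmonic μ Ω u ∧ (∑ x ∈ bdry μ Ω, u x ^ 2 * vm μ Ω x) = 1 ∧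
      (∑ x ∈ bdry μ Ω, u x * vm μ Ω x) = 0 := by
  classical
  have hB : (bdry μ Ω).Nonempty := Finset.card_pos.1 (by omega)
  obtain ⟨z1, hz1, z2, hz2, hz12⟩ := Finset.one_lt_card.1 (show 1 < (bdry μ Ω).card by omega)
  have hm1 : 0 < vm μ Ω z1 := vm_pos_bdry hnn hz1
  have hm2 : 0 < vm μ Ω z2 := vm_pos_bdry hnn hz2
  set φ : V → ℝ := fun y =>
    if y = z1 then (vm μ Ω z1)⁻¹ else if y = z2 then -(vm μ Ω z2)⁻¹ else 0 with hφ
  -- the interior operator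
  set L : ({x // x ∈ Ω} → ℝ) →ₗ[ℝ] ({x // x ∈ Ω} → ℝ) :=
    { toFun := fun f x => vm μ Ω x * f x - ∑ y : {x // x ∈ Ω}, μ x y * f y
      map_add' := by
        intro f g'
        funext x
        simp only [Pi.add_apply]
        rw [show (∑ y : {x // x ∈ Ω}, μ x y * (f y + g' y))
            = (∑ y : {x // x ∈ Ω}, μ x y * f y) + ∑ y : {x // x ∈ Ω}, μ x y * g' y by
          rw [← Finset.sum_add_distrib]
          exact Finset.sum_congr rfl fun y _ => by ring]
        ring
      map_smul' := by
        intro c f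
        funext x
        simp only [Pi.smul_apply, smul_eq_mul, RingHom.id_apply]
        rw [show (∑ y : {x // x ∈ Ω}, μ x y * (c * f y))
            = c * ∑ y : {x // x ∈ Ω}, μ x y * f y by
          rw [Finset.mul_sum]
          exact Finset.sum_congr rfl fun y _ => by ring]
        ring } with hL
  have hLinj : Function.Injective L := by
    rw [injective_iff_map_eq_zero]
    intro f hf
    have hfeq : ∀ x : {x // x ∈ Ω},
        vm μ Ω x * f x = ∑ y : {x // x ∈ Ω}, μ x y * f y := by
      intro x
      have := congrFun hf x
      simp only [hL, LinearMap.coe_mk, AddHom.coe_mk, Pi.zero_apply] at this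
      linarith
    set g : V → ℝ := fun y => if h : y ∈ Ω then f ⟨y, h⟩ else 0 with hg
    have hg0 : ∀ x ∈ bdry μ Ω, g x = 0 := by
      intro x hx
      have : x ∉ Ω := (mem_bdry_iff.1 hx).1
      simp [hg, this]
    have hsum_eq : ∀ x ∈ Ω, (∑ y : {x // x ∈ Ω}, μ x y * f y) = ∑ y ∈ Ω, μ x y * g y := by
      intro x _
      rw [Finset.univ_eq_attach, ← Finset.sum_attach Ω (fun y => μ x y * g y)]
      refine Finset.sum_congr rfl fun y _ => ?_
      simp [hg, y.2]
    have hharm : ∀ x ∈ Ω, vm μ Ω x * g x = ∑ y ∈ Ω, μ x y * g y := by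
      intro x hx
      rw [← hsum_eq x hx]
      have : g x = f ⟨x, hx⟩ := by simp [hg, hx]
      rw [this]
      exact hfeq ⟨x, hx⟩
    have hle := max_principle hnn hconn hB g hg0 hharm
    -- apply to -g as well
    have hfeq' : ∀ x : {x // x ∈ Ω},
        vm μ Ω x * (-g) x = ∑ y ∈ Ω, μ x y * (-g) y := by
      intro x
      simp only [Pi.neg_apply]
      have h1 : vm μ Ω ↑x * g ↑x = ∑ y ∈ Ω, μ ↑x y * g y := hharm x x.2
      rw [show (∑ y ∈ Ω, μ ↑x y * -g y) = -∑ y ∈ Ω, μ ↑x y * g y by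
        rw [← Finset.sum_neg_distrib]
        exact Finset.sum_congr rfl fun y _ => by ring]
      linarith
    have hge := max_principle hnn hconn hB (-g) (fun x hx => by simp [hg0 x hx])
      (fun x hx => hfeq' ⟨x, hx⟩)
    funext x
    have h1 := hle x.val (Omega_subset_clos x.2)
    have h2 := hge x.val (Omega_subset_clos x.2)
    simp only [Pi.neg_apply] at h2
    have hgx : g x.val = f x := by simp [hg, x.2, Subtype.coe_eta]
    have : g x.val = 0 := le_antisymm h1 (by linarith)
    rw [hgx] at this
    simpa using this
  have hLsurj : Function.Surjective L := (LinearMap.injective_iff_surjective).1 hLinj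
  obtain ⟨f, hf⟩ := hLsurj (fun x => ∑ y ∈ bdry μ Ω, μ x y * φ y)
  set u₀ : V → ℝ := fun y => if h : y ∈ Ω then f ⟨y, h⟩ else φ y with hu₀
  have hu₀bdry : ∀ y ∈ bdry μ Ω, u₀ y = φ y := by
    intro y hy
    have : y ∉ Ω := (mem_bdry_iff.1 hy).1
    simp [hu₀, this]
  have hu₀harm : IsHarmonic μ Ω u₀ := by
    intro x hx
    unfold lap
    have hvm : vm μ Ω x = ∑ y, μ x y := by unfold vm; rw [if_pos hx]
    have hexp : (∑ y, μ x y * (u₀ y - u₀ x))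
        = (∑ y, μ x y * u₀ y) - (∑ y, μ x y) * u₀ x := by
      rw [Finset.sum_mul, ← Finset.sum_sub_distrib]
      exact Finset.sum_congr rfl fun y _ => by ring
    have hsplit : (∑ y, μ x y * u₀ y)
        = (∑ y ∈ Ω, μ x y * u₀ y) + ∑ y ∈ Finset.univ \ Ω, μ x y * u₀ y := by
      rw [add_comm, Finset.sum_sdiff (Finset.subset_univ Ω)]
    have hout : (∑ y ∈ Finset.univ \ Ω, μ x y * u₀ y)
        = ∑ y ∈ bdry μ Ω, μ x y * φ y := by
      have hsub : bdry μ Ω ⊆ Finset.univ \ Ω := fun y hy =>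
        Finset.mem_sdiff.2 ⟨Finset.mem_univ y, (mem_bdry_iff.1 hy).1⟩
      have hzero : ∀ y ∈ Finset.univ \ Ω, y ∉ bdry μ Ω → μ x y * u₀ y = 0 := by
        intro y hy hyb
        have hyΩ : y ∉ Ω := (Finset.mem_sdiff.1 hy).2
        have hyc : y ∉ clos μ Ω := by
          intro hc
          rcases Finset.mem_union.1 hc with h | h
          exacts [hyΩ h, hyb h]
        rw [mu_zero_of_not_clos hsym hnn hx hyc, zero_mul]
      rw [← Finset.sum_subset hsub hzero]
      exact Finset.sum_congr rfl fun y hy => by rw [hu₀bdry y hy]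
    have hΩsum : (∑ y ∈ Ω, μ x y * u₀ y) = ∑ y : {v // v ∈ Ω}, μ x y * f y := by
      rw [Finset.univ_eq_attach, ← Finset.sum_attach Ω (fun y => μ x y * u₀ y)]
      exact Finset.sum_congr rfl fun y _ => by simp [hu₀, y.2]
    have hLf := congrFun hf ⟨x, hx⟩
    simp only [hL, LinearMap.coe_mk, AddHom.coe_mk] at hLf
    have hu₀x : u₀ x = f ⟨x, hx⟩ := by simp [hu₀, hx]
    have hnum : (∑ y, μ x y * (u₀ y - u₀ x)) = 0 := by
      rw [hexp, hsplit, hout, hΩsum, ← hvm, hu₀x]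
      linarith [hLf]
    rw [hnum]
    exact zero_div _
  -- boundary sums of φ
  have hpair : ({z1, z2} : Finset V) ⊆ bdry μ Ω := by
    intro y hy
    rcases Finset.mem_insert.1 hy with rfl | hy'
    · exact hz1
    · rw [Finset.mem_singleton.1 hy']; exact hz2
  have hφz1 : φ z1 = (vm μ Ω z1)⁻¹ := by simp [hφ]
  have hφz2 : φ z2 = -(vm μ Ω z2)⁻¹ := by
    rw [hφ]
    simp [if_neg hz12.symm]
  have hφ0 : ∀ y, y ≠ z1 → y ≠ z2 → φ y = 0 := by
    intro y h1 h2
    rw [hφ]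
    simp only [if_neg h1, if_neg h2]
  have hS1 : (∑ y ∈ bdry μ Ω, φ y * vm μ Ω y) = 0 := by
    rw [← Finset.sum_subset hpair ?_]
    · rw [Finset.sum_pair hz12, hφz1, hφz2]
      field_simp
      ring
    · intro y _ hyp
      have h1 : y ≠ z1 := by rintro rfl; exact hyp (by simp)
      have h2 : y ≠ z2 := by rintro rfl; exact hyp (by simp)
      rw [hφ0 y h1 h2, zero_mul]
  set c : ℝ := (vm μ Ω z1)⁻¹ + (vm μ Ω z2)⁻¹ with hcdef
  have hcpos : 0 < c := by positivity
  have hS2 : (∑ y ∈ bdry μ Ω, φ y ^ 2 * vm μ Ω y) = c := by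
    rw [← Finset.sum_subset hpair ?_]
    · rw [Finset.sum_pair hz12, hφz1, hφz2, hcdef]
      field_simp
    · intro y _ hyp
      have h1 : y ≠ z1 := by rintro rfl; exact hyp (by simp)
      have h2 : y ≠ z2 := by rintro rfl; exact hyp (by simp)
      rw [hφ0 y h1 h2]
      ring
  set k : ℝ := (Real.sqrt c)⁻¹ with hk
  have hk2 : k ^ 2 = c⁻¹ := by
    rw [hk, inv_pow, Real.sq_sqrt hcpos.le]
  refine ⟨fun y => k * u₀ y, ?_, ?_, ?_⟩
  · intro x hx
    rw [lap_smul, hu₀harm x hx, mul_zero]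
  · have : (∑ x ∈ bdry μ Ω, (k * u₀ x) ^ 2 * vm μ Ω x)
        = k ^ 2 * ∑ x ∈ bdry μ Ω, φ x ^ 2 * vm μ Ω x := by
      rw [Finset.mul_sum]
      exact Finset.sum_congr rfl fun x hx => by rw [hu₀bdry x hx]; ring
    rw [this, hS2, hk2]
    exact inv_mul_cancel₀ hcpos.ne'
  · have : (∑ x ∈ bdry μ Ω, (k * u₀ x) * vm μ Ω x)
        = k * ∑ x ∈ bdry μ Ω, φ x * vm μ Ω x := by
      rw [Finset.mul_sum]
      exact Finset.sum_congr rfl fun x hx => by rw [hu₀bdry x hx]; ring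
    rw [this, hS1, mul_zero]

end AuxExist


lemma maxsq (a b t : ℝ) :
    (max (a - t) 0 - max (b - t) 0) ^ 2 + (max (t - a) 0 - max (t - b) 0) ^ 2
      ≤ (a - b) ^ 2 := by
  rcases le_total a t with h1 | h1 <;> rcases le_total b t with h2 | h2
  · rw [max_eq_right (by linarith : a - t ≤ 0), max_eq_right (by linarith : b - t ≤ 0),
      max_eq_left (by linarith : (0:ℝ) ≤ t - a), max_eq_left (by linarith : (0:ℝ) ≤ t - b)]
    nlinarith
  · rw [max_eq_right (by linarith : a - t ≤ 0), max_eq_left (by linarith : (0:ℝ) ≤ b - t),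
      max_eq_left (by linarith : (0:ℝ) ≤ t - a), max_eq_right (by linarith : t - b ≤ 0)]
    nlinarith [mul_nonneg (by linarith : (0:ℝ) ≤ b - t) (by linarith : (0:ℝ) ≤ t - a)]
  · rw [max_eq_left (by linarith : (0:ℝ) ≤ a - t), max_eq_right (by linarith : b - t ≤ 0),
      max_eq_right (by linarith : t - a ≤ 0), max_eq_left (by linarith : (0:ℝ) ≤ t - b)]
    nlinarith [mul_nonneg (by linarith : (0:ℝ) ≤ a - t) (by linarith : (0:ℝ) ≤ t - b)]
  · rw [max_eq_left (by linarith : (0:ℝ) ≤ a - t), max_eq_left (by linarith : (0:ℝ) ≤ b - t),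
      max_eq_right (by linarith : t - a ≤ 0), max_eq_right (by linarith : t - b ≤ 0)]
    nlinarith

/-- Theorem 1.5 (Jammes-type Cheeger estimate): λ₁(Ω) ≥ ½ h(Ω̃) h_J(Ω̃). -/
theorem stmt_2 (μ : V → V → ℝ) (Ω : Finset V)
    (hsym : ∀ x y, μ x y = μ y x) (hnn : ∀ x y, 0 ≤ μ x y)
    (hconn : TilConnected μ Ω) (hcard : 2 ≤ (bdry μ Ω).card) :
    lambda1 μ Ω ≥ (1 / 2) * cheeger μ Ω * hJ μ Ω := by
  classical
  have hB : (bdry μ Ω).Nonempty := Finset.card_pos.1 (by omega)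
  obtain ⟨u₀, hu₀h, hu₀n1, hu₀n0⟩ := exists_normalized_harmonic hsym hnn hconn hcard
  rw [ge_iff_le]
  unfold lambda1
  refine le_csInf ⟨dirichlet μ Ω u₀, u₀, hu₀h, hu₀n1, hu₀n0, rfl⟩ ?_
  rintro r ⟨u, -, hn1, hn0, rfl⟩
  obtain ⟨t, hmed1, hmed2⟩ := exists_median (clos μ Ω) u (vm μ Ω) (vm_nonneg hnn)
  set wp : V → ℝ := fun x => max (u x - t) 0 with hwp
  set wm : V → ℝ := fun x => max (t - u x) 0 with hwm
  have hwpnn : ∀ x, 0 ≤ wp x := fun x => le_max_right _ _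
  have hwmnn : ∀ x, 0 ≤ wm x := fun x => le_max_right _ _
  have hsuppp : msum μ Ω ((clos μ Ω).filter (fun x => 0 < wp x))
      ≤ msum μ Ω (clos μ Ω) / 2 := by
    have heq : (clos μ Ω).filter (fun x => 0 < wp x)
        = (clos μ Ω).filter (fun x => t < u x) := by
      refine Finset.filter_congr fun x _ => ?_
      simp [hwp, lt_max_iff, sub_pos]
    rw [heq]
    exact hmed1
  have hsuppm : msum μ Ω ((clos μ Ω).filter (fun x => 0 < wm x))
      ≤ msum μ Ω (clos μ Ω) / 2 := by
    have heq : (clos μ Ω).filter (fun x => 0 < wm x)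
        = (clos μ Ω).filter (fun x => u x < t) := by
      refine Finset.filter_congr fun x _ => ?_
      simp [hwm, lt_max_iff, sub_pos]
    rw [heq]
    exact hmed2
  have hkp := key_estimate hsym hnn hconn hB wp hwpnn hsuppp
  have hkm := key_estimate hsym hnn hconn hB wm hwmnn hsuppm
  have hsplit : dirichlet μ Ω wp + dirichlet μ Ω wm ≤ dirichlet μ Ω u := by
    unfold dirichlet
    rw [← edgeSum_add]
    exact edgeSum_mono hnn fun x y => maxsq (u x) (u y) t
  have hQsum : (∑ x ∈ bdry μ Ω, wp x ^ 2 * vm μ Ω x)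
      + (∑ x ∈ bdry μ Ω, wm x ^ 2 * vm μ Ω x)
      = ∑ x ∈ bdry μ Ω, (u x - t) ^ 2 * vm μ Ω x := by
    rw [← Finset.sum_add_distrib]
    refine Finset.sum_congr rfl fun x _ => ?_
    have hsq : wp x ^ 2 + wm x ^ 2 = (u x - t) ^ 2 := by
      rcases le_total (u x) t with h | h
      · rw [hwp, hwm]
        dsimp only
        rw [max_eq_right (by linarith : u x - t ≤ 0),
          max_eq_left (by linarith : (0:ℝ) ≤ t - u x)]
        ring
      · rw [hwp, hwm]
        dsimp only
        rw [max_eq_left (by linarith : (0:ℝ) ≤ u x - t),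
          max_eq_right (by linarith : t - u x ≤ 0)]
        ring
    rw [← hsq]
    ring
  have hQlow : (1:ℝ) ≤ ∑ x ∈ bdry μ Ω, (u x - t) ^ 2 * vm μ Ω x := by
    have hexp : (∑ x ∈ bdry μ Ω, (u x - t) ^ 2 * vm μ Ω x)
        = (∑ x ∈ bdry μ Ω, u x ^ 2 * vm μ Ω x)
          - 2 * t * (∑ x ∈ bdry μ Ω, u x * vm μ Ω x)
          + t ^ 2 * ∑ x ∈ bdry μ Ω, vm μ Ω x := by
      rw [Finset.mul_sum, Finset.mul_sum, ← Finset.sum_sub_distrib, ← Finset.sum_add_distrib]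
      exact Finset.sum_congr rfl fun x _ => by ring
    rw [hexp, hn1, hn0]
    have h0 : (0:ℝ) ≤ t ^ 2 * ∑ x ∈ bdry μ Ω, vm μ Ω x :=
      mul_nonneg (sq_nonneg t) (Finset.sum_nonneg fun x _ => vm_nonneg hnn x)
    linarith
  have hhnn : 0 ≤ cheeger μ Ω * hJ μ Ω :=
    mul_nonneg (cheeger_nonneg hnn) (hJ_nonneg hnn)
  have hcomb : cheeger μ Ω * hJ μ Ω ≤ 2 * dirichlet μ Ω u := by
    calc cheeger μ Ω * hJ μ Ω
        ≤ cheeger μ Ω * hJ μ Ω * ∑ x ∈ bdry μ Ω, (u x - t) ^ 2 * vm μ Ω x :=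
          le_mul_of_one_le_right hhnn hQlow
      _ = cheeger μ Ω * hJ μ Ω * (∑ x ∈ bdry μ Ω, wp x ^ 2 * vm μ Ω x)
          + cheeger μ Ω * hJ μ Ω * (∑ x ∈ bdry μ Ω, wm x ^ 2 * vm μ Ω x) := by
          rw [← hQsum]; ring
      _ ≤ 2 * dirichlet μ Ω wp + 2 * dirichlet μ Ω wm := add_le_add hkp hkm
      _ ≤ 2 * dirichlet μ Ω u := by linarith
  linarith
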